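/- Let n ≥ 3, Â = I_n - E_{11} and B̂ = J_n in T_n. Then the distance between Â and B̂ in the orthogonality graph O(T_n) is at least 4; in particular, there is no path of length ≤ 3 between them. -/

import Mathlib

open Matrix

/-- The orthogonality graph of the algebra of upper triangular `n × n` matrices
over `F`: vertices are the nonzero singular (equivalently, two-sided zero
divisor) upper triangular matrices, with an edge between distinct `A`, `B` iff
`A * B = B * A = 0`. -/
def orthoGraph (F : Type*) [Field F] (n : ℕ) :
    SimpleGraph {A : Matrix (Fin n) (Fin n) F // A.BlockTriangular id ∧ A ≠ 0 ∧ A.det = 0} where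
  Adj X Y := X ≠ Y ∧ X.1 * Y.1 = 0 ∧ Y.1 * X.1 = 0
  symm := ⟨fun X Y h => ⟨h.1.symm, h.2.2, h.2.1⟩⟩
  loopless := ⟨fun X h => h.1 rfl⟩

section aux

variable {F : Type*} [Field F] {n : ℕ}

/-- Any matrix two-sided-orthogonal to `1 - E₁₁` is supported at `(0,0)`. -/
lemma aux_suppX (hn : 3 ≤ n) (M : Matrix (Fin n) (Fin n) F)
    (h1 : M * (1 - single (⟨0, by linarith⟩ : Fin n) (⟨0, by linarith⟩ : Fin n) (1 : F)) = 0)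
    (h2 : (1 - single (⟨0, by linarith⟩ : Fin n) (⟨0, by linarith⟩ : Fin n) (1 : F)) * M = 0)
    (i j : Fin n) (hij : ¬(i = ⟨0, by linarith⟩ ∧ j = ⟨0, by linarith⟩)) : M i j = 0 := by
  set z : Fin n := ⟨0, by omega⟩ with hz
  rw [Matrix.mul_sub, Matrix.mul_one, sub_eq_zero] at h1
  rw [Matrix.sub_mul, Matrix.one_mul, sub_eq_zero] at h2
  by_cases hj : j = z
  · subst hj
    have hi : i ≠ z := fun hi => hij ⟨hi, rfl⟩
    conv_lhs => rw [h2]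
    exact Matrix.single_mul_apply_of_ne (c := (1 : F)) z z i z hi M
  · conv_lhs => rw [h1]
    exact Matrix.mul_single_apply_of_ne (c := (1 : F)) z z i j hj M

/-- Columns `0,…,n-2` of any matrix `M` with `M * J = 0` vanish. -/
lemma aux_suppY_col (M : Matrix (Fin n) (Fin n) F)
    (h : M * (Matrix.of fun i j : Fin n => if (i : ℕ) + 1 = (j : ℕ) then (1 : F) else 0) = 0)
    (i j : Fin n) (hj : (j : ℕ) + 1 < n) : M i j = 0 := by
  have e := congrFun (congrFun h i) ⟨(j : ℕ) + 1, hj⟩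
  simp only [Matrix.mul_apply, Matrix.of_apply, Matrix.zero_apply] at e
  rw [Finset.sum_eq_single j] at e
  · simpa using e
  · intro k _ hk
    have : ¬((k : ℕ) + 1 = (j : ℕ) + 1) := fun hc => hk (Fin.ext (by omega))
    simp [this]
    exact fun hc => absurd (Fin.ext hc) hk
  · simp

/-- Rows `1,…,n-1` of any matrix `M` with `J * M = 0` vanish. -/
lemma aux_suppY_row (hn : 3 ≤ n) (M : Matrix (Fin n) (Fin n) F)
    (h : (Matrix.of fun i j : Fin n => if (i : ℕ) + 1 = (j : ℕ) then (1 : F) else 0) * M = 0)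
    (i j : Fin n) (hi : i ≠ (⟨0, by linarith⟩ : Fin n)) : M i j = 0 := by
  have hipos : 0 < (i : ℕ) := by
    rcases Nat.eq_zero_or_pos (i : ℕ) with h' | h'
    · exact absurd (Fin.ext h') hi
    · exact h'
  have e := congrFun (congrFun h ⟨(i : ℕ) - 1, by omega⟩) j
  simp only [Matrix.mul_apply, Matrix.of_apply, Matrix.zero_apply] at e
  rw [Finset.sum_eq_single i] at e
  · have hc : ((i : ℕ) - 1) + 1 = (i : ℕ) := by omega
    simpa [hc] using e
  · intro k _ hk
    have : ¬(((i : ℕ) - 1) + 1 = (k : ℕ)) := fun hc => hk (Fin.ext (by omega)).symm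
    simp [this]
  · simp

end aux

/-- For `n ≥ 3`, the distance in `O(Tₙ)` between `Â = I - E₁₁` and the nilpotent
Jordan block `B̂ = Jₙ` is at least `4`. -/
theorem stmt_11 {F : Type*} [Field F] {n : ℕ} (hn : 3 ≤ n)
    (X Y : {A : Matrix (Fin n) (Fin n) F // A.BlockTriangular id ∧ A ≠ 0 ∧ A.det = 0})
    (hX : X.1 = 1 - single (⟨0, by omega⟩ : Fin n) (⟨0, by omega⟩ : Fin n) (1 : F))
    (hY : Y.1 = Matrix.of fun i j : Fin n => if (i : ℕ) + 1 = (j : ℕ) then (1 : F) else 0) :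
    4 ≤ (orthoGraph F n).edist X Y := by
  set z : Fin n := ⟨0, by omega⟩ with hzdef
  set o : Fin n := ⟨1, by omega⟩ with hodef
  set l : Fin n := ⟨n - 1, by omega⟩ with hldef
  -- any vertex adjacent to X is supported at (0,0), hence has nonzero (0,0)-entry
  have nbrX : ∀ Z, (orthoGraph F n).Adj X Z →
      (∀ i j : Fin n, ¬(i = z ∧ j = z) → Z.1 i j = 0) ∧ Z.1 z z ≠ 0 := by
    intro Z hadj
    obtain ⟨-, hxz, hzx⟩ := hadj
    rw [hX] at hxz hzx
    have hsupp := aux_suppX hn Z.1 hzx hxz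
    refine ⟨hsupp, fun h00 => Z.2.2.1 ?_⟩
    ext i j
    by_cases hij : i = z ∧ j = z
    · obtain ⟨rfl, rfl⟩ := hij; simpa using h00
    · simpa using hsupp i j hij
  -- any vertex adjacent to Y is supported at (0, n-1), hence has nonzero (0,n-1)-entry
  have nbrY : ∀ W, (orthoGraph F n).Adj W Y →
      (∀ i j : Fin n, ¬(i = z ∧ j = l) → W.1 i j = 0) ∧ W.1 z l ≠ 0 := by
    intro W hadj
    obtain ⟨-, hwy, hyw⟩ := hadj
    rw [hY] at hwy hyw
    have hsupp : ∀ i j : Fin n, ¬(i = z ∧ j = l) → W.1 i j = 0 := by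
      intro i j hij
      by_cases hi : i = z
      · subst hi
        have hj : j ≠ l := fun hj => hij ⟨rfl, hj⟩
        have hjlt : (j : ℕ) + 1 < n := by
          have := j.2
          rcases Nat.lt_or_ge ((j : ℕ) + 1) n with h' | h'
          · exact h'
          · exact absurd (Fin.ext (show (j : ℕ) = n - 1 by omega)) hj
        exact aux_suppY_col W.1 hwy _ j hjlt
      · exact aux_suppY_row hn W.1 hyw i j hi
    refine ⟨hsupp, fun h0 => W.2.2.1 ?_⟩
    ext i j
    by_cases hij : i = z ∧ j = l
    · obtain ⟨rfl, rfl⟩ := hij; simpa using h0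
    · simpa using hsupp i j hij
  have key : ∀ w : (orthoGraph F n).Walk X Y, 4 ≤ w.length := by
    intro w
    by_contra hlen
    push_neg at hlen
    cases w with
    | nil =>
        -- X = Y : compare (1,1) entries
        have e : X.1 o o = (Matrix.of fun i j : Fin n =>
            if (i : ℕ) + 1 = (j : ℕ) then (1 : F) else 0) o o := by rw [← hY]
        rw [hX] at e
        have hoz : o ≠ z := by simp [hodef, hzdef, Fin.ext_iff]
        simp [Matrix.sub_apply, Matrix.one_apply, Matrix.single, Matrix.of_apply,
          Fin.ext_iff, hodef, hzdef] at e
    | cons hadj p =>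
      cases p with
      | nil =>
          -- X adjacent to Y : then Y is supported at (0,0), contradicting Y z o = 1
          obtain ⟨hsupp, -⟩ := nbrX Y hadj
          have := hsupp z o (by simp [hodef, hzdef, Fin.ext_iff])
          rw [hY] at this
          simp [hodef, hzdef] at this
      | cons hadj2 p2 =>
        cases p2 with
        | nil =>
            -- X ~ Z ~ Y
            rename_i Z
            obtain ⟨-, hZ00⟩ := nbrX Z hadj
            obtain ⟨hsuppY, -⟩ := nbrY Z hadj2
            exact hZ00 (hsuppY z z (by simp [hzdef, hldef, Fin.ext_iff]; omega))
        | cons hadj3 p3 =>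
          cases p3 with
          | nil =>
              -- X ~ Z ~ W ~ Y
              rename_i Z W
              obtain ⟨hsuppZ, hZ00⟩ := nbrX Z hadj
              obtain ⟨hsuppW, hW0l⟩ := nbrY W hadj3
              obtain ⟨-, hzw, -⟩ := hadj2
              have e := congrFun (congrFun hzw z) l
              simp only [Matrix.mul_apply, Matrix.zero_apply] at e
              rw [Finset.sum_eq_single z] at e
              · exact mul_ne_zero hZ00 hW0l e
              · intro k _ hk
                rw [hsuppZ z k (fun h => hk h.2), zero_mul]
              · simp
          | cons hadj4 p4 =>
              simp only [SimpleGraph.Walk.length_cons] at hlen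
              omega
  rw [SimpleGraph.edist_eq_sInf]
  refine le_sInf ?_
  rintro x ⟨w, rfl⟩
  show (4 : ℕ∞) ≤ (w.length : ℕ∞)
  exact_mod_cast key w
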